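/- Let X be a metric space and let ν = Σ_{i=1}^l λ_i δ_{a_i} − Σ_{j=1}^m μ_j δ_{b_j} be a finitely supported signed measure of total mass 0, with all λ_i > 0 and μ_j > 0. Then the Kantorovich norm ||ν|| = inf Σ_k |ν_k| d(x_k,y_k) over all representations ν = Σ_k ν_k (δ_{x_k} − δ_{y_k}) is attained by a representation of the form ν = Σ_{i,j} ν_{ij}(δ_{a_i} − δ_{b_j}) with all ν_{ij} ≥ 0, so that ||ν|| = min Σ_{i,j} ν_{ij} d(a_i,b_j) subject to Σ_j ν_{ij} = λ_i and Σ_i ν_{ij} = μ_j with ν_{ij} ≥ 0. -/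

import Mathlib

open Classical Finset

section Key
variable {ι : Type*} [Fintype ι] [DecidableEq ι]

noncomputable def marg1 (π : ι → ι → ℝ) (z : ι) : ℝ := ∑ q, π z q
noncomputable def marg2 (π : ι → ι → ℝ) (z : ι) : ℝ := ∑ p, π p z
noncomputable def cst (D π : ι → ι → ℝ) : ℝ := ∑ p, ∑ q, π p q * D p q

lemma elim (D : ι → ι → ℝ) (hD0 : ∀ p q, 0 ≤ D p q)
    (hDtri : ∀ p q r, D p r ≤ D p q + D q r)
    (π : ι → ι → ℝ) (hπ : ∀ p q, 0 ≤ π p q) (z : ι) :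
    ∃ π₂ : ι → ι → ℝ, (∀ p q, 0 ≤ π₂ p q) ∧
      (∀ w, w ≠ z → marg1 π₂ w = marg1 π w) ∧
      (∀ w, w ≠ z → marg2 π₂ w = marg2 π w) ∧
      (marg1 π₂ z - marg2 π₂ z = marg1 π z - marg2 π z) ∧
      (marg1 π₂ z = 0 ∨ marg2 π₂ z = 0) ∧ cst D π₂ ≤ cst D π := by
  -- Stage 1 : clear the diagonal atom at z
  set π₁ : ι → ι → ℝ := fun p q => if p = z ∧ q = z then 0 else π p q with hπ₁def
  have hπ₁ : ∀ p q, 0 ≤ π₁ p q := by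
    intro p q; simp only [hπ₁def]; split_ifs
    · exact le_refl 0
    · exact hπ p q
  have hπ₁le : ∀ p q, π₁ p q ≤ π p q := by
    intro p q; simp only [hπ₁def]; split_ifs with h
    · exact hπ p q
    · exact le_refl _
  have hπ₁zz : π₁ z z = 0 := by simp [hπ₁def]
  have hm1₁ : ∀ w, w ≠ z → marg1 π₁ w = marg1 π w := by
    intro w hw; unfold marg1
    refine Finset.sum_congr rfl fun q _ => ?_
    simp [hπ₁def, hw]
  have hm2₁ : ∀ w, w ≠ z → marg2 π₁ w = marg2 π w := by
    intro w hw; unfold marg2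
    refine Finset.sum_congr rfl fun p _ => ?_
    simp [hπ₁def, hw]
  have hm1z : marg1 π₁ z = marg1 π z - π z z := by
    unfold marg1
    have : ∀ q : ι, π₁ z q = π z q - (if q = z then π z z else 0) := by
      intro q; by_cases h : q = z <;> simp [hπ₁def, h]
    simp only [this, Finset.sum_sub_distrib, Finset.sum_ite_eq', Finset.mem_univ, if_true]
  have hm2z : marg2 π₁ z = marg2 π z - π z z := by
    unfold marg2
    have : ∀ p : ι, π₁ p z = π p z - (if p = z then π z z else 0) := by
      intro p; by_cases h : p = z <;> simp [hπ₁def, h]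
    simp only [this, Finset.sum_sub_distrib, Finset.sum_ite_eq', Finset.mem_univ, if_true]
  have hc₁ : cst D π₁ ≤ cst D π := by
    unfold cst
    refine Finset.sum_le_sum fun p _ => Finset.sum_le_sum fun q _ => ?_
    exact mul_le_mul_of_nonneg_right (hπ₁le p q) (hD0 p q)
  -- Stage 2
  set Az := marg1 π₁ z with hAzdef
  set Bz := marg2 π₁ z with hBzdef
  have hAz0 : 0 ≤ Az := Finset.sum_nonneg fun q _ => hπ₁ z q
  have hBz0 : 0 ≤ Bz := Finset.sum_nonneg fun p _ => hπ₁ p z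
  by_cases hzero : Az = 0 ∨ Bz = 0
  · refine ⟨π₁, hπ₁, hm1₁, hm2₁, ?_, hzero, hc₁⟩
    rw [← hAzdef, ← hBzdef, hm1z, hm2z]; ring
  push_neg at hzero
  have hAz : 0 < Az := lt_of_le_of_ne hAz0 (Ne.symm hzero.1)
  have hBz : 0 < Bz := lt_of_le_of_ne hBz0 (Ne.symm hzero.2)
  set γ : ℝ := min Az Bz / (Az * Bz) with hγdef
  have hγmul : γ * (Az * Bz) = min Az Bz := by
    rw [hγdef]; field_simp
  have hγ0 : 0 < γ := div_pos (lt_min hAz hBz) (mul_pos hAz hBz)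
  have hγB : γ * Bz ≤ 1 := by
    have h1 : γ * Bz * Az = min Az Bz := by rw [← hγmul]; ring
    have h2 : min Az Bz ≤ Az := min_le_left _ _
    nlinarith
  have hγA : γ * Az ≤ 1 := by
    have h1 : γ * Az * Bz = min Az Bz := by rw [← hγmul]; ring
    have h2 : min Az Bz ≤ Bz := min_le_right _ _
    nlinarith
  set π₂ : ι → ι → ℝ := fun p q =>
    π₁ p q - (if p = z then γ * Bz * π₁ z q else 0)
      - (if q = z then γ * Az * π₁ p z else 0) + γ * π₁ p z * π₁ z q with hπ₂def
  have hπ₂nn : ∀ p q, 0 ≤ π₂ p q := by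
    intro p q
    by_cases hp : p = z <;> by_cases hq : q = z
    · simp only [hπ₂def, hp, hq, if_pos rfl, hπ₁zz]; simp
    · simp only [hπ₂def, hp, if_pos rfl, if_neg hq, hπ₁zz, if_true]
      nlinarith [mul_nonneg (sub_nonneg.mpr hγB) (hπ₁ z q), hπ₁ z q]
    · simp only [hπ₂def, hq, if_neg hp, if_pos rfl, hπ₁zz, if_true]
      nlinarith [mul_nonneg (sub_nonneg.mpr hγA) (hπ₁ p z), hπ₁ p z]
    · simp only [hπ₂def, if_neg hp, if_neg hq]
      nlinarith [mul_nonneg (mul_nonneg hγ0.le (hπ₁ p z)) (hπ₁ z q), hπ₁ p q]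
  have hm1₂ : ∀ w, marg1 π₂ w = marg1 π₁ w - (if w = z then γ * Bz * Az else 0) := by
    intro w
    unfold marg1
    simp only [hπ₂def]
    rw [Finset.sum_add_distrib, Finset.sum_sub_distrib, Finset.sum_sub_distrib]
    have e1 : ∑ q : ι, (if w = z then γ * Bz * π₁ z q else 0)
        = (if w = z then γ * Bz * Az else 0) := by
      split_ifs with h
      · rw [← Finset.mul_sum]; rfl
      · simp
    have e2 : ∑ q : ι, (if q = z then γ * Az * π₁ w z else 0) = γ * Az * π₁ w z := by
      simp [Finset.sum_ite_eq']
    have e3 : ∑ q : ι, γ * π₁ w z * π₁ z q = γ * π₁ w z * Az := by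
      rw [← Finset.mul_sum]; rfl
    rw [e1, e2, e3]; ring
  have hm2₂ : ∀ w, marg2 π₂ w = marg2 π₁ w - (if w = z then γ * Az * Bz else 0) := by
    intro w
    unfold marg2
    simp only [hπ₂def]
    rw [Finset.sum_add_distrib, Finset.sum_sub_distrib, Finset.sum_sub_distrib]
    have e1 : ∑ p : ι, (if p = z then γ * Bz * π₁ z w else 0) = γ * Bz * π₁ z w := by
      simp [Finset.sum_ite_eq']
    have e2 : ∑ p : ι, (if w = z then γ * Az * π₁ p z else 0)
        = (if w = z then γ * Az * Bz else 0) := by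
      split_ifs with h
      · rw [← Finset.mul_sum]; rfl
      · simp
    have e3 : ∑ p : ι, γ * π₁ p z * π₁ z w = γ * Bz * π₁ z w := by
      rw [show (fun p => γ * π₁ p z * π₁ z w) = fun p => (γ * π₁ z w) * π₁ p z by funext p; ring]
      rw [← Finset.mul_sum]
      show γ * π₁ z w * Bz = _
      ring
    rw [e1, e2, e3]; ring
  refine ⟨π₂, hπ₂nn, ?_, ?_, ?_, ?_, ?_⟩
  · intro w hw; rw [hm1₂ w, if_neg hw, sub_zero, hm1₁ w hw]
  · intro w hw; rw [hm2₂ w, if_neg hw, sub_zero, hm2₁ w hw]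
  · rw [hm1₂ z, hm2₂ z, if_pos rfl, if_pos rfl, ← hAzdef, ← hBzdef, hm1z, hm2z]; ring
  · rcases le_total Az Bz with h | h
    · left; rw [hm1₂ z, if_pos rfl, ← hAzdef]
      have h2 : min Az Bz = Az := min_eq_left h
      nlinarith [hγmul]
    · right; rw [hm2₂ z, if_pos rfl, ← hBzdef]
      have h2 : min Az Bz = Bz := min_eq_right h
      nlinarith [hγmul]
  · -- cost estimate
    have key : cst D π₂ ≤ cst D π₁ := by
      unfold cst
      simp only [hπ₂def, sub_mul, add_mul, Finset.sum_add_distrib, Finset.sum_sub_distrib]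
      set s1 := ∑ q : ι, π₁ z q * D z q with hs1
      set s2 := ∑ p : ι, π₁ p z * D p z with hs2
      have hs1nn : 0 ≤ s1 := Finset.sum_nonneg fun q _ => mul_nonneg (hπ₁ z q) (hD0 z q)
      have hs2nn : 0 ≤ s2 := Finset.sum_nonneg fun p _ => mul_nonneg (hπ₁ p z) (hD0 p z)
      have eA : ∑ p : ι, ∑ q : ι, (if p = z then γ * Bz * π₁ z q else 0) * D p q
          = γ * Bz * s1 := by
        have : ∀ p : ι, ∑ q : ι, (if p = z then γ * Bz * π₁ z q else 0) * D p q
            = (if p = z then γ * Bz * s1 else 0) := by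
          intro p; split_ifs with h
          · subst h
            rw [hs1, Finset.mul_sum]
            exact Finset.sum_congr rfl fun q _ => by ring
          · simp
        simp only [this, Finset.sum_ite_eq', Finset.mem_univ, if_true]
      have eB : ∑ p : ι, ∑ q : ι, (if q = z then γ * Az * π₁ p z else 0) * D p q
          = γ * Az * s2 := by
        have : ∀ p : ι, ∑ q : ι, (if q = z then γ * Az * π₁ p z else 0) * D p q
            = γ * Az * (π₁ p z * D p z) := by
          intro p
          rw [show (fun q => (if q = z then γ * Az * π₁ p z else 0) * D p q)
              = fun q => (if q = z then γ * Az * π₁ p z * D p q else 0) by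
            funext q; split_ifs <;> simp]
          simp [Finset.sum_ite_eq']
          ring
        rw [Finset.sum_congr rfl fun p _ => this p, ← Finset.mul_sum, hs2]
      have eT : ∑ p : ι, ∑ q : ι, γ * π₁ p z * π₁ z q * D p q
          ≤ γ * Bz * s1 + γ * Az * s2 := by
        have step1 : ∑ p : ι, ∑ q : ι, γ * π₁ p z * π₁ z q * D p q
            ≤ ∑ p : ι, ∑ q : ι, γ * π₁ p z * π₁ z q * (D p z + D z q) := by
          refine Finset.sum_le_sum fun p _ => Finset.sum_le_sum fun q _ => ?_
          have hcoef : 0 ≤ γ * π₁ p z * π₁ z q :=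
            mul_nonneg (mul_nonneg hγ0.le (hπ₁ p z)) (hπ₁ z q)
          exact mul_le_mul_of_nonneg_left (hDtri p z q) hcoef
        have step2 : ∑ p : ι, ∑ q : ι, γ * π₁ p z * π₁ z q * (D p z + D z q)
            = γ * Bz * s1 + γ * Az * s2 := by
          have inner : ∀ p : ι, ∑ q : ι, γ * π₁ p z * π₁ z q * (D p z + D z q)
              = γ * π₁ p z * (D p z * Az) + γ * π₁ p z * s1 := by
            intro p
            rw [show (fun q => γ * π₁ p z * π₁ z q * (D p z + D z q))
                = fun q => (γ * π₁ p z * D p z) * π₁ z q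
                  + (γ * π₁ p z) * (π₁ z q * D z q) by funext q; ring]
            rw [Finset.sum_add_distrib, ← Finset.mul_sum, ← Finset.mul_sum, ← hs1]
            show γ * π₁ p z * D p z * Az + _ = _
            ring
          rw [Finset.sum_congr rfl fun p _ => inner p, Finset.sum_add_distrib]
          rw [show (fun p => γ * π₁ p z * (D p z * Az)) = fun p => (γ * Az) * (π₁ p z * D p z)
            by funext p; ring]
          rw [show (fun p => γ * π₁ p z * s1) = fun p => (γ * s1) * π₁ p z by funext p; ring]
          rw [← Finset.mul_sum, ← Finset.mul_sum, ← hs2]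
          show γ * Az * s2 + γ * s1 * Bz = _
          ring
        linarith
      linarith [eA, eB, eT]
    linarith [key, hc₁]


lemma reduce (D : ι → ι → ℝ) (hD0 : ∀ p q, 0 ≤ D p q)
    (hDtri : ∀ p q r, D p r ≤ D p q + D q r) :
    ∀ n : ℕ, ∀ π : ι → ι → ℝ, (∀ p q, 0 ≤ π p q) →
    (Finset.univ.filter (fun z => 0 < marg1 π z ∧ 0 < marg2 π z)).card ≤ n →
    ∃ π' : ι → ι → ℝ, (∀ p q, 0 ≤ π' p q) ∧
      (∀ z, marg1 π' z - marg2 π' z = marg1 π z - marg2 π z) ∧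
      (∀ z, marg1 π' z = 0 ∨ marg2 π' z = 0) ∧ cst D π' ≤ cst D π := by
  intro n
  induction n with
  | zero =>
    intro π hπ hcard
    refine ⟨π, hπ, fun z => rfl, fun z => ?_, le_refl _⟩
    have hz : z ∉ Finset.univ.filter (fun z => 0 < marg1 π z ∧ 0 < marg2 π z) := by
      have : (Finset.univ.filter (fun z => 0 < marg1 π z ∧ 0 < marg2 π z)) = ∅ :=
        Finset.card_eq_zero.mp (Nat.le_zero.mp hcard)
      simp [this]
    simp only [Finset.mem_filter, Finset.mem_univ, true_and, not_and_or, not_lt] at hz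
    have h1 : 0 ≤ marg1 π z := Finset.sum_nonneg fun q _ => hπ z q
    have h2 : 0 ≤ marg2 π z := Finset.sum_nonneg fun p _ => hπ p z
    rcases hz with h | h
    · exact Or.inl (le_antisymm h h1)
    · exact Or.inr (le_antisymm h h2)
  | succ n ih =>
    intro π hπ hcard
    by_cases hne : (Finset.univ.filter (fun z => 0 < marg1 π z ∧ 0 < marg2 π z)).Nonempty
    · obtain ⟨z, hz⟩ := hne
      obtain ⟨π₂, hnn, hm1, hm2, hdz, hone, hcst⟩ := elim D hD0 hDtri π hπ z
      have hsub : (Finset.univ.filter (fun w => 0 < marg1 π₂ w ∧ 0 < marg2 π₂ w))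
          ⊆ (Finset.univ.filter (fun w => 0 < marg1 π w ∧ 0 < marg2 π w)).erase z := by
        intro w hw
        simp only [Finset.mem_filter, Finset.mem_univ, true_and] at hw
        rcases eq_or_ne w z with rfl | hwz
        · exfalso
          rcases hone with h | h
          · exact absurd h (ne_of_gt hw.1)
          · exact absurd h (ne_of_gt hw.2)
        · rw [Finset.mem_erase]
          refine ⟨hwz, ?_⟩
          simp only [Finset.mem_filter, Finset.mem_univ, true_and]
          rw [← hm1 w hwz, ← hm2 w hwz]
          exact hw
      have hcard2 : (Finset.univ.filter (fun w => 0 < marg1 π₂ w ∧ 0 < marg2 π₂ w)).card ≤ n := by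
        have := Finset.card_le_card hsub
        have h2 := Finset.card_erase_of_mem hz
        omega
      obtain ⟨π', h1, h2, h3, h4⟩ := ih π₂ hnn hcard2
      refine ⟨π', h1, fun w => ?_, h3, le_trans h4 hcst⟩
      rcases eq_or_ne w z with rfl | hwz
      · rw [h2 w, hdz]
      · rw [h2 w, hm1 w hwz, hm2 w hwz]
    · refine ⟨π, hπ, fun z => rfl, fun z => ?_, le_refl _⟩
      have hz : z ∉ Finset.univ.filter (fun z => 0 < marg1 π z ∧ 0 < marg2 π z) := by
        rw [Finset.not_nonempty_iff_eq_empty] at hne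
        simp [hne]
      simp only [Finset.mem_filter, Finset.mem_univ, true_and, not_and_or, not_lt] at hz
      have h1 : 0 ≤ marg1 π z := Finset.sum_nonneg fun q _ => hπ z q
      have h2 : 0 ≤ marg2 π z := Finset.sum_nonneg fun p _ => hπ p z
      rcases hz with h | h
      · exact Or.inl (le_antisymm h h1)
      · exact Or.inr (le_antisymm h h2)


end Key

lemma posneg {A B v : ℝ} (hA : 0 ≤ A) (hB : 0 ≤ B) (hd : A - B = v) (h : A = 0 ∨ B = 0) :
    A = max v 0 ∧ B = max (-v) 0 := by
  rcases h with h | h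
  · constructor
    · rw [h, max_eq_right (by linarith)]
    · rw [max_eq_left (by linarith)]; linarith
  · constructor
    · rw [max_eq_left (by linarith)]; linarith
    · rw [h, max_eq_right (by linarith)]

/-- Let `ν = Σ λ_i δ_{a_i} − Σ μ_j δ_{b_j}` be a finitely supported signed measure of total
mass `0` on a metric space `X`, with all `λ_i, μ_j > 0` (and distinct atoms `a_i`, resp.
`b_j`).  Then the Kantorovich norm `‖ν‖ = inf Σ_k |ν_k| d(x_k,y_k)` (inf over all
representations `ν = Σ_k ν_k (δ_{x_k} − δ_{y_k})`) is attained by a transport plan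
`ν_{ij} ≥ 0` with marginals `Σ_j ν_{ij} = λ_i`, `Σ_i ν_{ij} = μ_j`, so that
`‖ν‖ = min Σ_{i,j} ν_{ij} d(a_i,b_j)` over that polytope. -/
theorem stmt11 {X : Type*} [MetricSpace X] {l m : ℕ}
    (a : Fin l → X) (b : Fin m → X) (ha : Function.Injective a) (hb : Function.Injective b)
    (lam : Fin l → ℝ) (mu : Fin m → ℝ) (hlam : ∀ i, 0 < lam i) (hmu : ∀ j, 0 < mu j)
    (hmass : ∑ i, lam i = ∑ j, mu j) :
    ∃ ν : Fin l → Fin m → ℝ,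
      (∀ i j, 0 ≤ ν i j) ∧ (∀ i, ∑ j, ν i j = lam i) ∧ (∀ j, ∑ i, ν i j = mu j) ∧
      IsLeast {c : ℝ | ∃ (r : ℕ) (w : Fin r → ℝ) (x y : Fin r → X),
          (∀ z : X, ((∑ i, if a i = z then lam i else 0) - ∑ j, if b j = z then mu j else 0)
              = ∑ k, w k * ((if x k = z then (1 : ℝ) else 0) - (if y k = z then 1 else 0))) ∧
          c = ∑ k, |w k| * dist (x k) (y k)}
        (∑ i, ∑ j, ν i j * dist (a i) (b j)) := by
  classical
  set f : (Fin l → Fin m → ℝ) → ℝ := fun ρ => ∑ i, ∑ j, ρ i j * dist (a i) (b j) with hfdef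
  set P : Set (Fin l → Fin m → ℝ) :=
    {ρ | (∀ i j, 0 ≤ ρ i j) ∧ (∀ i, ∑ j, ρ i j = lam i) ∧ (∀ j, ∑ i, ρ i j = mu j)} with hPdef
  have hPne : P.Nonempty := by
    refine ⟨fun i j => lam i * mu j / (∑ i', lam i'), ?_, ?_, ?_⟩
    · intro i j
      have h1 : 0 ≤ ∑ i', lam i' := Finset.sum_nonneg fun i' _ => (hlam i').le
      exact div_nonneg (mul_nonneg (hlam i).le (hmu j).le) h1
    · intro i
      have hT : (0:ℝ) < ∑ i', lam i' :=
        Finset.sum_pos (fun i' _ => hlam i') ⟨i, Finset.mem_univ i⟩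
      rw [← Finset.sum_div, ← Finset.mul_sum, ← hmass]
      field_simp
    · intro j
      have hT : (0:ℝ) < ∑ j', mu j' :=
        Finset.sum_pos (fun j' _ => hmu j') ⟨j, Finset.mem_univ j⟩
      rw [← Finset.sum_div, ← Finset.sum_mul, hmass]
      field_simp
  have hPclosed : IsClosed P := by
    have e : P = (⋂ (i) (j), {ρ : Fin l → Fin m → ℝ | 0 ≤ ρ i j}) ∩
        ((⋂ i, {ρ : Fin l → Fin m → ℝ | ∑ j, ρ i j = lam i}) ∩
          (⋂ j, {ρ : Fin l → Fin m → ℝ | ∑ i, ρ i j = mu j})) := by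
      ext ρ
      simp only [hPdef, Set.mem_inter_iff, Set.mem_iInter, Set.mem_setOf_eq]
    rw [e]
    refine ((isClosed_iInter fun i => isClosed_iInter fun j => ?_)).inter
      (((isClosed_iInter fun i => ?_)).inter ((isClosed_iInter fun j => ?_)))
    · exact isClosed_le continuous_const ((continuous_apply j).comp (continuous_apply i))
    · exact isClosed_eq
        (continuous_finset_sum _ fun j _ => ((continuous_apply j).comp (continuous_apply i)))
        continuous_const
    · exact isClosed_eq
        (continuous_finset_sum _ fun i _ => ((continuous_apply j).comp (continuous_apply i)))
        continuous_const
  have hPcomp : IsCompact P := by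
    refine IsCompact.of_isClosed_subset (isCompact_Icc
      (a := fun (_ : Fin l) (_ : Fin m) => (0:ℝ)) (b := fun i _ => lam i)) hPclosed ?_
    intro ρ hρ
    obtain ⟨h1, h2, _⟩ := hρ
    constructor
    · intro i; intro j; exact h1 i j
    · intro i; intro j
      calc ρ i j ≤ ∑ j', ρ i j' :=
            Finset.single_le_sum (fun j' _ => h1 i j') (Finset.mem_univ j)
        _ = lam i := h2 i
  have hfc : Continuous f := by
    refine continuous_finset_sum _ fun i _ => continuous_finset_sum _ fun j _ => ?_
    exact (show Continuous fun ρ : Fin l → Fin m → ℝ => ρ i j from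
      (continuous_apply j).comp (continuous_apply i)).mul continuous_const
  obtain ⟨ν, hνP, hνmin⟩ := hPcomp.exists_isMinOn hPne hfc.continuousOn
  obtain ⟨hν1, hν2, hν3⟩ := hνP
  refine ⟨ν, hν1, hν2, hν3, ?_, ?_⟩
  · -- membership
    refine ⟨l * m, fun k => ν (finProdFinEquiv.symm k).1 (finProdFinEquiv.symm k).2,
      fun k => a (finProdFinEquiv.symm k).1, fun k => b (finProdFinEquiv.symm k).2, ?_, ?_⟩
    · intro z
      have main : ∀ g1 : Fin l × Fin m → ℝ,
          ∑ k : Fin (l * m), g1 (finProdFinEquiv.symm k) = ∑ i, ∑ j, g1 (i, j) := by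
        intro g1
        rw [← Fintype.sum_prod_type]
        exact Fintype.sum_equiv finProdFinEquiv.symm _ _ (fun k => rfl)
      rw [show (∑ k : Fin (l * m), ν (finProdFinEquiv.symm k).1 (finProdFinEquiv.symm k).2 *
            ((if a (finProdFinEquiv.symm k).1 = z then (1:ℝ) else 0) -
              (if b (finProdFinEquiv.symm k).2 = z then 1 else 0)))
          = ∑ i, ∑ j, ν i j * ((if a i = z then (1:ℝ) else 0) - (if b j = z then 1 else 0))
          from main (fun p => ν p.1 p.2 *
            ((if a p.1 = z then (1:ℝ) else 0) - (if b p.2 = z then 1 else 0)))]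
      have e1 : ∀ i j, ν i j * ((if a i = z then (1:ℝ) else 0) - (if b j = z then 1 else 0))
          = (if a i = z then ν i j else 0) - (if b j = z then ν i j else 0) := by
        intro i j; split_ifs <;> ring
      simp only [e1, Finset.sum_sub_distrib]
      congr 1
      · refine Finset.sum_congr rfl fun i _ => ?_
        split_ifs with h
        · exact (hν2 i).symm
        · exact (Finset.sum_eq_zero fun j _ => rfl).symm
      · rw [Finset.sum_comm]
        refine Finset.sum_congr rfl fun j _ => ?_
        split_ifs with h
        · exact (hν3 j).symm
        · exact (Finset.sum_eq_zero fun i _ => rfl).symm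
    · have main : ∀ g1 : Fin l × Fin m → ℝ,
          ∑ k : Fin (l * m), g1 (finProdFinEquiv.symm k) = ∑ i, ∑ j, g1 (i, j) := by
        intro g1
        rw [← Fintype.sum_prod_type]
        exact Fintype.sum_equiv finProdFinEquiv.symm _ _ (fun k => rfl)
      rw [show (∑ k : Fin (l * m), |ν (finProdFinEquiv.symm k).1 (finProdFinEquiv.symm k).2| *
            dist (a (finProdFinEquiv.symm k).1) (b (finProdFinEquiv.symm k).2))
          = ∑ i, ∑ j, |ν i j| * dist (a i) (b j)
          from main (fun p => |ν p.1 p.2| * dist (a p.1) (b p.2))]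
      exact Finset.sum_congr rfl fun i _ => Finset.sum_congr rfl fun j _ => by
        rw [abs_of_nonneg (hν1 i j)]
  · -- lower bound
    rintro c ⟨r, w, x, y, hid, rfl⟩
    -- normalize signs
    set w' : Fin r → ℝ := fun k => |w k| with hw'def
    set x' : Fin r → X := fun k => if 0 ≤ w k then x k else y k with hx'def
    set y' : Fin r → X := fun k => if 0 ≤ w k then y k else x k with hy'def
    have hw' : ∀ k, 0 ≤ w' k := fun k => abs_nonneg _
    have hid' : ∀ z : X,
        ((∑ i, if a i = z then lam i else 0) - ∑ j, if b j = z then mu j else 0)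
          = ∑ k, w' k * ((if x' k = z then (1:ℝ) else 0) - (if y' k = z then 1 else 0)) := by
      intro z
      rw [hid z]
      refine Finset.sum_congr rfl fun k _ => ?_
      by_cases h : 0 ≤ w k
      · simp only [hw'def, hx'def, hy'def, if_pos h, abs_of_nonneg h]
      · simp only [hw'def, hx'def, hy'def, if_neg h, abs_of_neg (lt_of_not_ge h)]
        ring
    have hcost' : ∑ k, |w k| * dist (x k) (y k) = ∑ k, w' k * dist (x' k) (y' k) := by
      refine Finset.sum_congr rfl fun k _ => ?_
      by_cases h : 0 ≤ w k
      · simp only [hw'def, hx'def, hy'def, if_pos h]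
      · simp only [hw'def, hx'def, hy'def, if_neg h, dist_comm (x k) (y k)]
    -- the finite ground set
    set S : Finset X := Finset.univ.image a ∪ Finset.univ.image b ∪ Finset.univ.image x'
        ∪ Finset.univ.image y' with hSdef
    have haS : ∀ i, a i ∈ S := fun i => by
      simp only [hSdef, Finset.mem_union, Finset.mem_image]
      exact Or.inl (Or.inl (Or.inl ⟨i, Finset.mem_univ i, rfl⟩))
    have hbS : ∀ j, b j ∈ S := fun j => by
      simp only [hSdef, Finset.mem_union, Finset.mem_image]
      exact Or.inl (Or.inl (Or.inr ⟨j, Finset.mem_univ j, rfl⟩))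
    have hxS : ∀ k, x' k ∈ S := fun k => by
      simp only [hSdef, Finset.mem_union, Finset.mem_image]
      exact Or.inl (Or.inr ⟨k, Finset.mem_univ k, rfl⟩)
    have hyS : ∀ k, y' k ∈ S := fun k => by
      simp only [hSdef, Finset.mem_union, Finset.mem_image]
      exact Or.inr ⟨k, Finset.mem_univ k, rfl⟩
    set D : ↥S → ↥S → ℝ := fun p q => dist (p : X) (q : X) with hDdef
    have hD0 : ∀ p q : ↥S, 0 ≤ D p q := fun p q => dist_nonneg
    have hDtri : ∀ p q t : ↥S, D p t ≤ D p q + D q t := fun p q t => dist_triangle _ _ _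
    set π0 : ↥S → ↥S → ℝ :=
      fun p q => ∑ k, if x' k = (p : X) ∧ y' k = (q : X) then w' k else 0 with hπ0def
    have hπ0 : ∀ p q, 0 ≤ π0 p q := by
      intro p q
      exact Finset.sum_nonneg fun k _ => by split_ifs; exacts [hw' k, le_refl 0]
    have uniq : ∀ (v : X) (hv : v ∈ S) (t : ℝ), (∑ q : ↥S, if v = (q : X) then t else 0) = t := by
      intro v hv t
      rw [Finset.sum_eq_single (⟨v, hv⟩ : ↥S)]
      · simp
      · intro q _ hq
        rw [if_neg]
        intro h
        exact hq (Subtype.ext h.symm)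
      · intro h
        exact absurd (Finset.mem_univ _) h
    have hA0 : ∀ p : ↥S, marg1 π0 p = ∑ k, if x' k = (p : X) then w' k else 0 := by
      intro p
      unfold marg1
      rw [hπ0def, Finset.sum_comm]
      refine Finset.sum_congr rfl fun k _ => ?_
      by_cases hx : x' k = (p : X)
      · rw [if_pos hx]
        rw [show (∑ q : ↥S, if x' k = (p : X) ∧ y' k = (q : X) then w' k else 0)
            = ∑ q : ↥S, if y' k = (q : X) then w' k else 0 from
          Finset.sum_congr rfl fun q _ => by simp [hx]]
        exact uniq _ (hyS k) _
      · rw [if_neg hx]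
        exact Finset.sum_eq_zero fun q _ => by simp [hx]
    have hB0 : ∀ q : ↥S, marg2 π0 q = ∑ k, if y' k = (q : X) then w' k else 0 := by
      intro q
      unfold marg2
      rw [hπ0def, Finset.sum_comm]
      refine Finset.sum_congr rfl fun k _ => ?_
      by_cases hy : y' k = (q : X)
      · rw [show (∑ p : ↥S, if x' k = (p : X) ∧ y' k = (q : X) then w' k else 0)
            = ∑ p : ↥S, if x' k = (p : X) then w' k else 0 from
          Finset.sum_congr rfl fun p _ => by simp [hy]]
        rw [if_pos hy]
        exact uniq _ (hxS k) _
      · rw [if_neg hy]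
        exact Finset.sum_eq_zero fun p _ => by simp [hy]
    set nf : X → ℝ :=
      fun u => (∑ i, if a i = u then lam i else 0) - ∑ j, if b j = u then mu j else 0 with hnfdef
    have hdiff0 : ∀ p : ↥S, marg1 π0 p - marg2 π0 p = nf (p : X) := by
      intro p
      rw [hA0 p, hB0 p, ← Finset.sum_sub_distrib]
      simp only [hnfdef]
      rw [hid' (p : X)]
      refine Finset.sum_congr rfl fun k _ => ?_
      split_ifs <;> ring
    have hcost0 : cst D π0 = ∑ k, w' k * dist (x' k) (y' k) := by
      unfold cst
      rw [hπ0def]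
      have e1 : ∀ p q : ↥S, (∑ k, if x' k = (p : X) ∧ y' k = (q : X) then w' k else 0) * D p q
          = ∑ k, if x' k = (p : X) ∧ y' k = (q : X) then w' k * dist (x' k) (y' k) else 0 := by
        intro p q
        rw [Finset.sum_mul]
        refine Finset.sum_congr rfl fun k _ => ?_
        split_ifs with h
        · simp only [hDdef]
          rw [← h.1, ← h.2]
        · exact zero_mul _
      have estep : (∑ p : ↥S, ∑ q : ↥S,
            (∑ k, if x' k = (p : X) ∧ y' k = (q : X) then w' k else 0) * D p q)
          = ∑ k, ∑ p : ↥S, ∑ q : ↥S,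
            (if x' k = (p : X) ∧ y' k = (q : X) then w' k * dist (x' k) (y' k) else 0) := by
        rw [show (∑ p : ↥S, ∑ q : ↥S,
            (∑ k, if x' k = (p : X) ∧ y' k = (q : X) then w' k else 0) * D p q)
            = ∑ p : ↥S, ∑ q : ↥S, ∑ k,
              (if x' k = (p : X) ∧ y' k = (q : X) then w' k * dist (x' k) (y' k) else 0) from
          Finset.sum_congr rfl fun p _ => Finset.sum_congr rfl fun q _ => e1 p q]
        rw [show (∑ p : ↥S, ∑ q : ↥S, ∑ k,
              (if x' k = (p : X) ∧ y' k = (q : X) then w' k * dist (x' k) (y' k) else 0))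
            = ∑ p : ↥S, ∑ k, ∑ q : ↥S,
              (if x' k = (p : X) ∧ y' k = (q : X) then w' k * dist (x' k) (y' k) else 0) from
          Finset.sum_congr rfl fun p _ => Finset.sum_comm]
        exact Finset.sum_comm
      rw [estep]
      have e2 : ∀ p : ↥S, ∀ k, (∑ q : ↥S, if x' k = (p : X) ∧ y' k = (q : X)
          then w' k * dist (x' k) (y' k) else 0)
          = if x' k = (p : X) then w' k * dist (x' k) (y' k) else 0 := by
        intro p k
        by_cases hx : x' k = (p : X)
        · rw [if_pos hx]
          rw [show (∑ q : ↥S, if x' k = (p : X) ∧ y' k = (q : X)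
              then w' k * dist (x' k) (y' k) else 0)
              = ∑ q : ↥S, if y' k = (q : X) then w' k * dist (x' k) (y' k) else 0 from
            Finset.sum_congr rfl fun q _ => by simp [hx]]
          exact uniq _ (hyS k) _
        · rw [if_neg hx]
          exact Finset.sum_eq_zero fun q _ => by simp [hx]
      calc ∑ k, ∑ p : ↥S, ∑ q : ↥S,
            (if x' k = (p : X) ∧ y' k = (q : X) then w' k * dist (x' k) (y' k) else 0)
          = ∑ k, ∑ p : ↥S, (if x' k = (p : X) then w' k * dist (x' k) (y' k) else 0) := by
            refine Finset.sum_congr rfl fun k _ => Finset.sum_congr rfl fun p _ => e2 p k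
        _ = ∑ k, w' k * dist (x' k) (y' k) :=
            Finset.sum_congr rfl fun k _ => uniq _ (hxS k) _
    -- apply the reduction lemma
    obtain ⟨π', hπ'nn, hdiff', hzero', hcstle⟩ :=
      reduce D hD0 hDtri (Fintype.card ↥S) π0 hπ0
        (le_trans (Finset.card_filter_le _ _) (le_of_eq Finset.card_univ))
    have hm1nn : ∀ p : ↥S, 0 ≤ marg1 π' p := fun p => Finset.sum_nonneg fun q _ => hπ'nn p q
    have hm2nn : ∀ p : ↥S, 0 ≤ marg2 π' p := fun p => Finset.sum_nonneg fun q _ => hπ'nn q p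
    have hmargs : ∀ p : ↥S,
        marg1 π' p = max (nf (p : X)) 0 ∧ marg2 π' p = max (-(nf (p : X))) 0 := by
      intro p
      refine posneg (hm1nn p) (hm2nn p) ?_ (hzero' p)
      rw [hdiff' p, hdiff0 p]
    -- basic facts about nf
    have hsumb0 : ∀ u : X, 0 ≤ ∑ j, (if b j = u then mu j else 0) :=
      fun u => Finset.sum_nonneg fun j _ => by split_ifs; exacts [(hmu j).le, le_refl 0]
    have hsuma0 : ∀ u : X, 0 ≤ ∑ i, (if a i = u then lam i else 0) :=
      fun u => Finset.sum_nonneg fun i _ => by split_ifs; exacts [(hlam i).le, le_refl 0]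
    have hpos_mem : ∀ u : X, 0 < nf u → ∃ i, a i = u := by
      intro u h
      by_contra hex
      push_neg at hex
      have h1 : (∑ i, if a i = u then lam i else 0) = 0 :=
        Finset.sum_eq_zero fun i _ => if_neg (hex i)
      simp only [hnfdef] at h
      rw [h1] at h
      have := hsumb0 u
      linarith
    have hneg_mem : ∀ u : X, nf u < 0 → ∃ j, b j = u := by
      intro u h
      by_contra hex
      push_neg at hex
      have h1 : (∑ j, if b j = u then mu j else 0) = 0 :=
        Finset.sum_eq_zero fun j _ => if_neg (hex j)
      simp only [hnfdef] at h
      rw [h1] at h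
      have := hsuma0 u
      linarith
    have hsuma : ∀ i, (∑ i', if a i' = a i then lam i' else 0) = lam i := by
      intro i
      rw [Finset.sum_eq_single i]
      · rw [if_pos rfl]
      · intro i' _ hi'
        exact if_neg fun h => hi' (ha h)
      · intro h
        exact absurd (Finset.mem_univ _) h
    have hsumbb : ∀ j, (∑ j', if b j' = b j then mu j' else 0) = mu j := by
      intro j
      rw [Finset.sum_eq_single j]
      · rw [if_pos rfl]
      · intro j' _ hj'
        exact if_neg fun h => hj' (hb h)
      · intro h
        exact absurd (Finset.mem_univ _) h
    -- support of π'
    have hbound1 : ∀ p q : ↥S, π' p q ≤ marg1 π' p :=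
      fun p q => Finset.single_le_sum (f := fun q' => π' p q')
        (fun q' _ => hπ'nn p q') (Finset.mem_univ q)
    have hbound2 : ∀ p q : ↥S, π' p q ≤ marg2 π' q :=
      fun p q => Finset.single_le_sum (f := fun p' => π' p' q)
        (fun p' _ => hπ'nn p' q) (Finset.mem_univ p)
    have hvan1 : ∀ p q : ↥S, ¬(0 < nf (p : X)) → π' p q = 0 := by
      intro p q h
      have h1 : marg1 π' p = 0 := by
        rw [(hmargs p).1, max_eq_right (by push_neg at h; exact h)]
      exact le_antisymm (h1 ▸ hbound1 p q) (hπ'nn p q)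
    have hvan2 : ∀ p q : ↥S, ¬(nf (q : X) < 0) → π' p q = 0 := by
      intro p q h
      have h1 : marg2 π' q = 0 := by
        rw [(hmargs q).2, max_eq_right (by push_neg at h; linarith)]
      exact le_antisymm (h1 ▸ hbound2 p q) (hπ'nn p q)
    set gA : Fin l → ↥S := fun i => ⟨a i, haS i⟩ with hgAdef
    set gB : Fin m → ↥S := fun j => ⟨b j, hbS j⟩ with hgBdef
    have hgAinj : ∀ i ∈ Finset.univ, ∀ i' ∈ Finset.univ, gA i = gA i' → i = i' :=
      fun i _ i' _ h => ha (by simpa [hgAdef, Subtype.ext_iff] using h)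
    have hgBinj : ∀ j ∈ Finset.univ, ∀ j' ∈ Finset.univ, gB j = gB j' → j = j' :=
      fun j _ j' _ h => hb (by simpa [hgBdef, Subtype.ext_iff] using h)
    have hvanB : ∀ (p q : ↥S) (c : ℝ), q ∉ Finset.univ.image gB → π' p q * c = 0 := by
      intro p q cc hq
      have : π' p q = 0 := by
        refine hvan2 p q fun hlt => ?_
        obtain ⟨j, hj⟩ := hneg_mem _ hlt
        exact hq (Finset.mem_image.mpr ⟨j, Finset.mem_univ j, Subtype.ext hj⟩)
      rw [this, zero_mul]
    have hvanA : ∀ p : ↥S, p ∉ Finset.univ.image gA → ∀ q : ↥S, π' p q = 0 := by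
      intro p hp q
      refine hvan1 p q fun hlt => ?_
      obtain ⟨i, hi⟩ := hpos_mem _ hlt
      exact hp (Finset.mem_image.mpr ⟨i, Finset.mem_univ i, Subtype.ext hi⟩)
    -- marginal sums over the images
    have F1 : ∀ p : ↥S, marg1 π' p = ∑ j, π' p (gB j) := by
      intro p
      unfold marg1
      rw [← Finset.sum_subset (Finset.subset_univ (Finset.univ.image gB))
        (fun q _ hq => by
          have := hvanB p q 1 hq
          simpa using this)]
      rw [Finset.sum_image hgBinj]
    have F2 : ∀ q : ↥S, marg2 π' q = ∑ i, π' (gA i) q := by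
      intro q
      unfold marg2
      rw [← Finset.sum_subset (Finset.subset_univ (Finset.univ.image gA))
        (fun p _ hp => hvanA p hp q)]
      rw [Finset.sum_image hgAinj]
    -- the transport plan induced by π'
    set ρ : Fin l → Fin m → ℝ :=
      fun i j => π' (gA i) (gB j) + (if a i = b j then min (lam i) (mu j) else 0) with hρdef
    have hρnn : ∀ i j, 0 ≤ ρ i j := by
      intro i j
      simp only [hρdef]
      have h2 : (0:ℝ) ≤ if a i = b j then min (lam i) (mu j) else 0 := by
        split_ifs
        · exact le_min (hlam i).le (hmu j).le
        · exact le_refl 0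
      have := hπ'nn (gA i) (gB j)
      linarith
    have hrow : ∀ i, ∑ j, ρ i j = lam i := by
      intro i
      simp only [hρdef]
      rw [Finset.sum_add_distrib]
      have h1 : marg1 π' (gA i) = max (nf (a i)) 0 := (hmargs (gA i)).1
      rw [← F1 (gA i), h1]
      by_cases hex : ∃ j0, b j0 = a i
      · obtain ⟨j0, hj0⟩ := hex
        have hd : (∑ j, if a i = b j then min (lam i) (mu j) else 0)
            = min (lam i) (mu j0) := by
          rw [Finset.sum_eq_single j0]
          · rw [if_pos hj0.symm]
          · intro j _ hj
            exact if_neg fun h => hj (hb (h.symm.trans hj0.symm))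
          · intro h
            exact absurd (Finset.mem_univ _) h
        have hs2 : (∑ j, if b j = a i then mu j else 0) = mu j0 := by
          rw [Finset.sum_eq_single j0]
          · rw [if_pos hj0]
          · intro j _ hj
            exact if_neg fun h => hj (hb (h.trans hj0.symm))
          · intro h
            exact absurd (Finset.mem_univ _) h
        have hnfai : nf (a i) = lam i - mu j0 := by
          simp only [hnfdef]
          rw [hsuma i, hs2]
        rw [hd, hnfai]
        rcases le_total (lam i) (mu j0) with h | h
        · rw [max_eq_right (by linarith), min_eq_left h]
          ring
        · rw [max_eq_left (by linarith), min_eq_right h]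
          ring
      · push_neg at hex
        have hd : (∑ j, if a i = b j then min (lam i) (mu j) else 0) = 0 :=
          Finset.sum_eq_zero fun j _ => if_neg fun h => (hex j) h.symm
        have hnfai : nf (a i) = lam i := by
          simp only [hnfdef]
          rw [hsuma i, Finset.sum_eq_zero fun j _ => if_neg (hex j)]
          ring
        rw [hd, hnfai, max_eq_left (hlam i).le]
        ring
    have hcol : ∀ j, ∑ i, ρ i j = mu j := by
      intro j
      simp only [hρdef]
      rw [Finset.sum_add_distrib]
      have h1 : marg2 π' (gB j) = max (-(nf (b j))) 0 := (hmargs (gB j)).2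
      rw [← F2 (gB j), h1]
      by_cases hex : ∃ i0, a i0 = b j
      · obtain ⟨i0, hi0⟩ := hex
        have hd : (∑ i, if a i = b j then min (lam i) (mu j) else 0)
            = min (lam i0) (mu j) := by
          rw [Finset.sum_eq_single i0]
          · rw [if_pos hi0]
          · intro i _ hi
            exact if_neg fun h => hi (ha (h.trans hi0.symm))
          · intro h
            exact absurd (Finset.mem_univ _) h
        have hs1 : (∑ i, if a i = b j then lam i else 0) = lam i0 := by
          rw [Finset.sum_eq_single i0]
          · rw [if_pos hi0]
          · intro i _ hi
            exact if_neg fun h => hi (ha (h.trans hi0.symm))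
          · intro h
            exact absurd (Finset.mem_univ _) h
        have hnfbj : nf (b j) = lam i0 - mu j := by
          simp only [hnfdef]
          rw [hs1, hsumbb j]
        rw [hd, hnfbj]
        rcases le_total (lam i0) (mu j) with h | h
        · rw [max_eq_left (by linarith), min_eq_left h]
          ring
        · rw [max_eq_right (by linarith), min_eq_right h]
          ring
      · push_neg at hex
        have hd : (∑ i, if a i = b j then min (lam i) (mu j) else 0) = 0 :=
          Finset.sum_eq_zero fun i _ => if_neg (hex i)
        have hnfbj : nf (b j) = -(mu j) := by
          simp only [hnfdef]
          rw [hsumbb j, Finset.sum_eq_zero fun i _ => if_neg (hex i)]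
          ring
        rw [hd, hnfbj, neg_neg, max_eq_left (hmu j).le]
        ring
    -- cost of ρ equals cost of π'
    have hcostρ : ∑ i, ∑ j, ρ i j * dist (a i) (b j) = cst D π' := by
      have hterm : ∀ i j, ρ i j * dist (a i) (b j)
          = π' (gA i) (gB j) * dist (a i) (b j) := by
        intro i j
        by_cases h : a i = b j
        · have hd0 : dist (a i) (b j) = 0 := by rw [h, dist_self]
          rw [hd0, mul_zero, mul_zero]
        · simp only [hρdef, if_neg h, add_zero]
      rw [Finset.sum_congr rfl fun i (_ : i ∈ Finset.univ) =>
        Finset.sum_congr rfl fun j (_ : j ∈ Finset.univ) => hterm i j]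
      unfold cst
      have inner : ∀ p : ↥S, ∑ q : ↥S, π' p q * D p q = ∑ j, π' p (gB j) * D p (gB j) := by
        intro p
        rw [← Finset.sum_subset (Finset.subset_univ (Finset.univ.image gB))
          (fun q _ hq => hvanB p q (D p q) hq)]
        rw [Finset.sum_image hgBinj]
      rw [show (∑ p : ↥S, ∑ q : ↥S, π' p q * D p q)
          = ∑ p : ↥S, ∑ j, π' p (gB j) * D p (gB j) from
        Finset.sum_congr rfl fun p _ => inner p]
      rw [← Finset.sum_subset (Finset.subset_univ (Finset.univ.image gA))
        (fun p _ hp => Finset.sum_eq_zero fun j _ => by rw [hvanA p hp (gB j), zero_mul])]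
      rw [Finset.sum_image hgAinj]
    -- put everything together
    have hρP : ρ ∈ P := ⟨hρnn, hrow, hcol⟩
    calc ∑ i, ∑ j, ν i j * dist (a i) (b j) = f ν := rfl
      _ ≤ f ρ := hνmin hρP
      _ = cst D π' := hcostρ
      _ ≤ cst D π0 := hcstle
      _ = ∑ k, w' k * dist (x' k) (y' k) := hcost0
      _ = ∑ k, |w k| * dist (x k) (y k) := hcost'.symm
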